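/- Let g = 2, I the standard symplectic involution (0 -E; E 0), and M = (E S; 0 E) with S a real symmetric 2×2 matrix. Then w(I,M) = 0 if tr(S) ≥ 0 and w(I,M) = -1 if tr(S) < 0. -/

import Mathlib

open Matrix Complex

noncomputable section

/-- The space of `2g × 2g` real matrices (symplectic candidates). -/
abbrev SpMat (g : ℕ) := Matrix (Fin g ⊕ Fin g) (Fin g ⊕ Fin g) ℝ

/-- The Siegel upper half plane of genus `g`: symmetric complex matrices with
positive definite imaginary part. -/
def SiegelUHP (g : ℕ) : Set (Matrix (Fin g) (Fin g) ℂ) :=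
  {Z | Z.IsSymm ∧ Matrix.PosDef (Matrix.of fun i j => (Z i j).im)}

/-- Coercion of a real matrix to a complex matrix. -/
def cmat {g : ℕ} (A : Matrix (Fin g) (Fin g) ℝ) : Matrix (Fin g) (Fin g) ℂ :=
  A.map (fun x => (x : ℂ))

/-- The automorphy factor `J(M,Z) = det (C Z + D)`. -/
def Jfac {g : ℕ} (M : SpMat g) (Z : Matrix (Fin g) (Fin g) ℂ) : ℂ :=
  (cmat M.toBlocks₂₁ * Z + cmat M.toBlocks₂₂).det

/-- The action `M⟨Z⟩ = (A Z + B)(C Z + D)⁻¹` on the Siegel upper half plane. -/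
def spAct {g : ℕ} (M : SpMat g) (Z : Matrix (Fin g) (Fin g) ℂ) :
    Matrix (Fin g) (Fin g) ℂ :=
  (cmat M.toBlocks₁₁ * Z + cmat M.toBlocks₁₂) *
    (cmat M.toBlocks₂₁ * Z + cmat M.toBlocks₂₂)⁻¹

/-- The base point `i·E` of the Siegel upper half plane. -/
def iE (g : ℕ) : Matrix (Fin g) (Fin g) ℂ := Complex.I • 1

/-- `L` is a continuous branch of `arg J(M, ·)` on the Siegel upper half plane,
normalized to the principal value at `Z = iE`. -/
def IsArgBranch (g : ℕ) (L : SpMat g → Matrix (Fin g) (Fin g) ℂ → ℝ) : Prop :=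
  (∀ M ∈ Matrix.symplecticGroup (Fin g) ℝ, ContinuousOn (L M) (SiegelUHP g)) ∧
  (∀ M ∈ Matrix.symplecticGroup (Fin g) ℝ, ∀ Z ∈ SiegelUHP g,
      ((‖Jfac M Z‖ : ℝ) : ℂ) * Complex.exp (Complex.I * (L M Z)) = Jfac M Z) ∧
  (∀ M ∈ Matrix.symplecticGroup (Fin g) ℝ, L M (iE g) = Complex.arg (Jfac M (iE g)))

/-- The cocycle `w(M,N) = (1/2π)(L(MN,Z) - L(M,NZ) - L(N,Z))`, evaluated at the
base point `Z = iE` (it is independent of `Z`). -/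
def wcoc {g : ℕ} (L : SpMat g → Matrix (Fin g) (Fin g) ℂ → ℝ) (M N : SpMat g) : ℝ :=
  (L (M * N) (iE g) - L M (spAct N (iE g)) - L N (iE g)) / (2 * Real.pi)

/-! ### Auxiliary lemmas -/

private lemma intStep_const {f : ℝ → ℝ} (hf : ContinuousOn f (Set.Icc 0 1))
    (hv : ∀ t ∈ Set.Icc (0:ℝ) 1, ∃ n : ℤ, f t = n) : f 1 = f 0 := by
  obtain ⟨n0, h0⟩ := hv 0 (by norm_num)
  obtain ⟨n1, h1⟩ := hv 1 (by norm_num)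
  by_contra hne
  have key : ∀ c : ℝ, c ∈ Set.Icc (f 0) (f 1) ∪ Set.Icc (f 1) (f 0) → ∃ m : ℤ, (m : ℝ) = c := by
    intro c hc
    rcases hc with hc | hc
    · obtain ⟨t, ht, hft⟩ := intermediate_value_Icc (by norm_num : (0:ℝ) ≤ 1) hf hc
      obtain ⟨m, hm⟩ := hv t ht
      exact ⟨m, by rw [← hm, hft]⟩
    · obtain ⟨t, ht, hft⟩ := intermediate_value_Icc' (by norm_num : (0:ℝ) ≤ 1) hf hc
      obtain ⟨m, hm⟩ := hv t ht
      exact ⟨m, by rw [← hm, hft]⟩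
  rcases lt_or_gt_of_ne hne with h | h
  · have hlt : (n1 : ℝ) < n0 := by rw [← h0, ← h1]; exact h
    have hle : (n1 : ℝ) + 1 ≤ n0 := by
      exact_mod_cast Int.add_one_le_iff.mpr (by exact_mod_cast hlt)
    obtain ⟨m, hm⟩ := key ((n1 : ℝ) + 1/2) (Or.inr ⟨by rw [h1]; linarith, by rw [h0]; linarith⟩)
    have h2 : (2 * m : ℝ) = 2 * n1 + 1 := by rw [mul_comm]; linarith
    have : (2 * m : ℤ) = 2 * n1 + 1 := by exact_mod_cast h2
    omega
  · have hlt : (n0 : ℝ) < n1 := by rw [← h0, ← h1]; exact h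
    have hle : (n0 : ℝ) + 1 ≤ n1 := by
      exact_mod_cast Int.add_one_le_iff.mpr (by exact_mod_cast hlt)
    obtain ⟨m, hm⟩ := key ((n0 : ℝ) + 1/2) (Or.inl ⟨by rw [h0]; linarith, by rw [h1]; linarith⟩)
    have h2 : (2 * m : ℝ) = 2 * n0 + 1 := by linarith
    have : (2 * m : ℤ) = 2 * n0 + 1 := by exact_mod_cast h2
    omega

private lemma exp_I_real (x : ℝ) :
    Complex.exp (Complex.I * x) = (Real.cos x : ℂ) + (Real.sin x : ℂ) * Complex.I := by
  rw [mul_comm, Complex.exp_mul_I, Complex.ofReal_cos, Complex.ofReal_sin]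

private lemma real_of_exp_eq {a b : ℝ}
    (h : Complex.exp (Complex.I * a) = Complex.exp (Complex.I * b)) :
    ∃ n : ℤ, a = b + n * (2 * Real.pi) := by
  rw [Complex.exp_eq_exp_iff_exists_int] at h
  obtain ⟨n, hn⟩ := h
  refine ⟨n, ?_⟩
  have := congrArg Complex.im hn
  simpa [Complex.mul_im, Complex.mul_re] using this

private lemma ratio_bounds {z : ℂ} (hz : z ≠ 0) :
    -1 ≤ z.re / ‖z‖ ∧ z.re / ‖z‖ ≤ 1 := by
  have hpos : 0 < ‖z‖ := norm_pos_iff.mpr hz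
  have h := Complex.abs_re_le_norm z
  constructor
  · rw [neg_le, ← neg_div, div_le_one hpos]
    exact (abs_le.mp h).1 |> neg_le.mp |>.trans_eq rfl
  · rw [div_le_one hpos]; exact (abs_le.mp h).2

private lemma sqrt_one_sub_ratio {z : ℂ} (hz : z ≠ 0) :
    Real.sqrt (1 - (z.re / ‖z‖)^2) = |z.im| / ‖z‖ := by
  have hpos : 0 < ‖z‖ := norm_pos_iff.mpr hz
  have hsq : (‖z‖)^2 = z.re^2 + z.im^2 := by
    rw [Complex.sq_norm, Complex.normSq_apply]; ring
  have h : 1 - (z.re / ‖z‖)^2 = (z.im / ‖z‖)^2 := by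
    field_simp
    linarith
  rw [h, pow_two, Real.sqrt_mul_self_eq_abs, abs_div, abs_of_pos hpos]

private lemma exp_arccos_up {z : ℂ} (hz : z ≠ 0) (him : 0 ≤ z.im) :
    Complex.exp (Complex.I * (Real.arccos (z.re / ‖z‖) : ℝ)) =
      z / ((‖z‖ : ℝ) : ℂ) := by
  obtain ⟨hb1, hb2⟩ := ratio_bounds hz
  rw [exp_I_real]
  apply Complex.ext
  · simp only [Complex.add_re, Complex.ofReal_re, Complex.mul_re, Complex.I_re, Complex.I_im,
      Complex.ofReal_im, Complex.div_ofReal_re]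
    rw [Real.cos_arccos hb1 hb2]; ring
  · simp only [Complex.add_im, Complex.ofReal_im, Complex.mul_im, Complex.I_re, Complex.I_im,
      Complex.ofReal_re, Complex.div_ofReal_im]
    rw [Real.sin_arccos, sqrt_one_sub_ratio hz, _root_.abs_of_nonneg him]; ring

private lemma exp_arccos_down {z : ℂ} (hz : z ≠ 0) (him : z.im ≤ 0) :
    Complex.exp (Complex.I * ((2 * Real.pi - Real.arccos (z.re / ‖z‖) : ℝ))) =
      z / ((‖z‖ : ℝ) : ℂ) := by
  obtain ⟨hb1, hb2⟩ := ratio_bounds hz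
  rw [exp_I_real]
  have hc : Real.cos (2 * Real.pi - Real.arccos (z.re / ‖z‖)) =
      z.re / ‖z‖ := by
    rw [Real.cos_sub, Real.cos_two_pi, Real.sin_two_pi, Real.cos_arccos hb1 hb2]; ring_nf
  have hs : Real.sin (2 * Real.pi - Real.arccos (z.re / ‖z‖)) =
      z.im / ‖z‖ := by
    rw [Real.sin_sub, Real.cos_two_pi, Real.sin_two_pi, Real.sin_arccos,
      sqrt_one_sub_ratio hz, _root_.abs_of_nonpos him]; ring
  apply Complex.ext
  · simp only [Complex.add_re, Complex.ofReal_re, Complex.mul_re, Complex.I_re, Complex.I_im,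
      Complex.ofReal_im, Complex.div_ofReal_re, hc]; ring
  · simp only [Complex.add_im, Complex.ofReal_im, Complex.mul_im, Complex.I_re, Complex.I_im,
      Complex.ofReal_re, Complex.div_ofReal_im, hs]; ring

private lemma cmat_zero {g : ℕ} : cmat (0 : Matrix (Fin g) (Fin g) ℝ) = 0 := by
  ext i j; simp [cmat]

private lemma cmat_one {g : ℕ} : cmat (1 : Matrix (Fin g) (Fin g) ℝ) = 1 :=
  Matrix.map_one _ Complex.ofReal_zero Complex.ofReal_one

/-- The path `t ↦ iE + t S` in the Siegel upper half plane. -/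
private def Zp (S : Matrix (Fin 2) (Fin 2) ℝ) (t : ℝ) : Matrix (Fin 2) (Fin 2) ℂ :=
  iE 2 + (t : ℂ) • cmat S

private lemma Zp_apply (S : Matrix (Fin 2) (Fin 2) ℝ) (t : ℝ) (i j : Fin 2) :
    Zp S t i j = (if i = j then Complex.I else 0) + (t : ℂ) * (S i j : ℂ) := by
  simp [Zp, iE, cmat, Matrix.add_apply, Matrix.smul_apply, Matrix.one_apply, Matrix.map_apply,
    smul_eq_mul, mul_ite, mul_one, mul_zero]

private lemma Zp_zero (S : Matrix (Fin 2) (Fin 2) ℝ) : Zp S 0 = iE 2 := by simp [Zp]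

private lemma Zp_one (S : Matrix (Fin 2) (Fin 2) ℝ) : Zp S 1 = iE 2 + cmat S := by simp [Zp]

private lemma Zp_mem (S : Matrix (Fin 2) (Fin 2) ℝ) (hS : S.IsSymm) (t : ℝ) :
    Zp S t ∈ SiegelUHP 2 := by
  constructor
  · show (Zp S t)ᵀ = Zp S t
    ext i j
    rw [Matrix.transpose_apply, Zp_apply, Zp_apply]
    have h : S j i = S i j := hS.apply i j
    rw [h]
    congr 1
    simp [eq_comm]
  · have h : (Matrix.of fun i j => ((Zp S t) i j).im) = (1 : Matrix (Fin 2) (Fin 2) ℝ) := by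
      ext i j
      rw [Matrix.of_apply, Zp_apply]
      by_cases h : i = j <;> simp [h, Matrix.one_apply]
    rw [h]
    exact Matrix.PosDef.one

private lemma Zp_cont (S : Matrix (Fin 2) (Fin 2) ℝ) : Continuous (Zp S) := by
  unfold Zp
  fun_prop

private lemma Zp_det (S : Matrix (Fin 2) (Fin 2) ℝ) (t : ℝ) : (Zp S t).det =
    (Complex.I + t * S 0 0) * (Complex.I + t * S 1 1) - (t * S 0 1) * (t * S 1 0) := by
  rw [Matrix.det_fin_two, Zp_apply, Zp_apply, Zp_apply, Zp_apply]
  norm_num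

private lemma Zp_det_re (S : Matrix (Fin 2) (Fin 2) ℝ) (t : ℝ) :
    ((Zp S t).det).re = t^2 * (S 0 0 * S 1 1 - S 0 1 * S 1 0) - 1 := by
  rw [Zp_det]
  simp [Complex.mul_re, Complex.mul_im]
  ring

private lemma Zp_det_im (S : Matrix (Fin 2) (Fin 2) ℝ) (t : ℝ) :
    ((Zp S t).det).im = t * (S 0 0 + S 1 1) := by
  rw [Zp_det]
  simp [Complex.mul_re, Complex.mul_im]
  ring

private lemma Zp_det_ne (S : Matrix (Fin 2) (Fin 2) ℝ) (hS : S.IsSymm) (t : ℝ) :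
    (Zp S t).det ≠ 0 := by
  intro h0
  have hre := Zp_det_re S t
  have him := Zp_det_im S t
  rw [h0, Complex.zero_re] at hre
  rw [h0, Complex.zero_im] at him
  rcases mul_eq_zero.mp him.symm with ht | hT
  · rw [ht] at hre; norm_num at hre
  · have h11 : S 1 1 = -(S 0 0) := by linarith
    have h10 : S 1 0 = S 0 1 := hS.apply 0 1 ▸ rfl
    rw [h11, h10] at hre
    nlinarith [sq_nonneg (t * S 0 0), sq_nonneg (t * S 0 1)]

private lemma Zp_det_contOn (S : Matrix (Fin 2) (Fin 2) ℝ) :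
    Continuous (fun t : ℝ => (Zp S t).det) := by
  simp only [Zp_det]
  fun_prop

/-- For `g = 2`, `I = (0 -E; E 0)` and `M = (E S; 0 E)` with `S` real symmetric:
`w(I,M) = 0` if `tr S ≥ 0` and `w(I,M) = -1` if `tr S < 0`. -/
theorem w_I_translation
    (L : SpMat 2 → Matrix (Fin 2) (Fin 2) ℂ → ℝ) (hL : IsArgBranch 2 L)
    (S : Matrix (Fin 2) (Fin 2) ℝ) (hS : S.IsSymm) :
    wcoc L (Matrix.fromBlocks 0 (-1) 1 0) (Matrix.fromBlocks 1 S 0 1) =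
      if 0 ≤ S.trace then 0 else -1 := by
  obtain ⟨hcont, hphase, hbase⟩ := hL
  set MI : SpMat 2 := Matrix.fromBlocks 0 (-1) 1 0 with hMIdef
  set MT : SpMat 2 := Matrix.fromBlocks 1 S 0 1 with hMTdef
  have hMI : MI ∈ Matrix.symplecticGroup (Fin 2) ℝ := SymplecticGroup.J_mem _ _
  have hMT : MT ∈ Matrix.symplecticGroup (Fin 2) ℝ := by
    rw [hMTdef, SymplecticGroup.mem_iff, Matrix.J, Matrix.fromBlocks_transpose,
      Matrix.fromBlocks_multiply, Matrix.fromBlocks_multiply]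
    simp [hS.eq]
  have hMM : MI * MT ∈ Matrix.symplecticGroup (Fin 2) ℝ := mul_mem hMI hMT
  -- Jfac computations
  have hJI : ∀ Z : Matrix (Fin 2) (Fin 2) ℂ, Jfac MI Z = Z.det := by
    intro Z; rw [hMIdef]; simp [Jfac, cmat_zero, cmat_one]
  have hJT : Jfac MT (iE 2) = 1 := by
    rw [hMTdef]; simp [Jfac, cmat_zero, cmat_one]
  have hJIM : Jfac (MI * MT) (iE 2) = (Zp S 1).det := by
    rw [hMIdef, hMTdef,
      show (Matrix.fromBlocks 0 (-1) 1 0 : SpMat 2) * Matrix.fromBlocks 1 S 0 1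
        = Matrix.fromBlocks 0 (-1) 1 S by rw [Matrix.fromBlocks_multiply]; simp,
      Zp_one]
    simp [Jfac, cmat_zero, cmat_one]
  have hact : spAct MT (iE 2) = Zp S 1 := by
    rw [hMTdef, Zp_one]; simp [spAct, cmat_zero, cmat_one]
  have hdet_iE : (iE 2).det = -1 := by
    rw [iE, Matrix.det_smul]; norm_num [Complex.I_sq]
  -- base values
  have hLT : L MT (iE 2) = 0 := by rw [hbase MT hMT, hJT, Complex.arg_one]
  have hLIM : L (MI * MT) (iE 2) = Complex.arg ((Zp S 1).det) := by
    rw [hbase (MI * MT) hMM, hJIM]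
  have hf0 : L MI (Zp S 0) = Real.pi := by
    rw [Zp_zero, hbase MI hMI, hJI, hdet_iE, Complex.arg_neg_one]
  have hfcont : ContinuousOn (fun t => L MI (Zp S t)) (Set.Icc 0 1) :=
    (hcont MI hMI).comp (Zp_cont S).continuousOn (fun t _ => Zp_mem S hS t)
  have habs_ne : ∀ t : ℝ, ((‖(Zp S t).det‖ : ℝ) : ℂ) ≠ 0 := fun t =>
    Complex.ofReal_ne_zero.mpr (norm_ne_zero_iff.mpr (Zp_det_ne S hS t))
  have hfexp : ∀ t : ℝ, Complex.exp (Complex.I * (L MI (Zp S t))) =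
      (Zp S t).det / ((‖(Zp S t).det‖ : ℝ) : ℂ) := by
    intro t
    have h := hphase MI hMI (Zp S t) (Zp_mem S hS t)
    rw [hJI] at h
    rw [eq_div_iff (habs_ne t), mul_comm]
    exact h
  have hratio_cont : ContinuousOn
      (fun t : ℝ => ((Zp S t).det).re / ‖(Zp S t).det‖) (Set.Icc 0 1) := by
    apply ContinuousOn.div
    · exact (Complex.continuous_re.comp (Zp_det_contOn S)).continuousOn
    · exact (continuous_norm.comp (Zp_det_contOn S)).continuousOn
    · exact fun t _ => norm_ne_zero_iff.mpr (Zp_det_ne S hS t)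
  -- the branch-comparison machine
  have hbranch : ∀ a : ℝ → ℝ, ContinuousOn a (Set.Icc 0 1) → a 0 = Real.pi →
      (∀ t ∈ Set.Icc (0:ℝ) 1, Complex.exp (Complex.I * (a t)) =
        (Zp S t).det / ((‖(Zp S t).det‖ : ℝ) : ℂ)) →
      L MI (Zp S 1) = a 1 := by
    intro a hacont ha0 haexp
    have hg : ∀ t ∈ Set.Icc (0:ℝ) 1,
        ∃ n : ℤ, (L MI (Zp S t) - a t) / (2 * Real.pi) = n := by
      intro t ht
      obtain ⟨n, hn⟩ := real_of_exp_eq ((hfexp t).trans (haexp t ht).symm)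
      refine ⟨n, ?_⟩
      rw [hn]
      field_simp
      ring
    have hconst := intStep_const (f := fun t => (L MI (Zp S t) - a t) / (2 * Real.pi))
      ((hfcont.sub hacont).div_const _) hg
    have h2pi : (2 * Real.pi) ≠ 0 := by positivity
    rw [div_eq_div_iff h2pi h2pi] at hconst
    have := mul_right_cancel₀ h2pi hconst
    rw [hf0, ha0] at this
    linarith
  rcases le_or_gt 0 S.trace with hT | hT
  · -- nonnegative trace
    have hT' : 0 ≤ S 0 0 + S 1 1 := by rwa [Matrix.trace_fin_two] at hT
    have hfinal : L MI (Zp S 1) = Complex.arg ((Zp S 1).det) := by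
      have := hbranch (fun t => Real.arccos (((Zp S t).det).re / ‖(Zp S t).det‖))
        (Real.continuous_arccos.comp_continuousOn hratio_cont)
        (by
          simp only [Zp_zero, hdet_iE]
          norm_num [Real.arccos_neg_one])
        (fun t ht => exp_arccos_up (Zp_det_ne S hS t)
          (by rw [Zp_det_im]; exact mul_nonneg ht.1 hT'))
      rw [this]
      exact (Complex.arg_of_im_nonneg_of_ne_zero
        (by rw [Zp_det_im]; simpa using hT') (Zp_det_ne S hS 1)).symm
    unfold wcoc
    rw [hact, hLIM, hfinal, hLT, if_pos hT]
    simp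
  · -- negative trace
    have hT' : S 0 0 + S 1 1 < 0 := by rwa [Matrix.trace_fin_two] at hT
    have hfinal : L MI (Zp S 1) = 2 * Real.pi + Complex.arg ((Zp S 1).det) := by
      have harg : Complex.arg ((Zp S 1).det) =
          -Real.arccos (((Zp S 1).det).re / ‖(Zp S 1).det‖) :=
        Complex.arg_of_im_neg (by rw [Zp_det_im]; simpa using hT')
      have := hbranch
        (fun t => 2 * Real.pi - Real.arccos (((Zp S t).det).re / ‖(Zp S t).det‖))
        (continuousOn_const.sub (Real.continuous_arccos.comp_continuousOn hratio_cont))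
        (by
          simp only [Zp_zero, hdet_iE]
          norm_num [Real.arccos_neg_one]
          ring)
        (fun t ht => exp_arccos_down (Zp_det_ne S hS t)
          (by
            rw [Zp_det_im]
            exact mul_nonpos_iff.mpr (Or.inl ⟨ht.1, hT'.le⟩)))
      rw [this, harg]
      ring
    unfold wcoc
    rw [hact, hLIM, hfinal, hLT, if_neg (not_le.mpr hT)]
    have h2pi : Real.pi ≠ 0 := Real.pi_ne_zero
    field_simp
    ring
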